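/- arXiv:1501.06465 — 2 statements merged into one kernel-verified Lean document; each statement's English description precedes it below -/
import Mathlib

section
/- For any t > 0 and k ≥ 1, the k-fold iterated integral ∫₀ᵗ g(t,t₁) ∫₀^{t₁} g(t₁,t₂) ⋯ ∫₀^{t_{k−1}} g(t_{k−1},t_k) dt_k ⋯ dt₁ with kernel g(t,s) = 1 + ln t − ln s equals (k+1) tᵏ / k!. -/
open MeasureTheory Real Nat

/-- The `k`-fold iterated integral with kernel `g(t,s) = 1 + log t - log s`. -/
noncomputable def iterInt : ℕ → ℝ → ℝ
  | 0, _ => 1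
  | (k + 1), t => ∫ s in (0:ℝ)..t, (1 + Real.log t - Real.log s) * iterInt k s

lemma myIntegrableLog (t : ℝ) (ht : 0 ≤ t) : IntervalIntegrable Real.log volume 0 t := by
  have hg : IntervalIntegrable (fun s : ℝ => 2 * s ^ (-(1/2) : ℝ) + s) volume 0 t :=
    ((intervalIntegral.intervalIntegrable_rpow' (by norm_num)).const_mul 2).add
      (continuous_id.intervalIntegrable _ _)
  refine hg.mono_fun Real.measurable_log.aestronglyMeasurable ?_
  filter_upwards [MeasureTheory.ae_restrict_mem measurableSet_uIoc] with s hs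
  rw [Set.uIoc_of_le ht] at hs
  have hs0 : 0 < s := hs.1
  have hr : (0:ℝ) < s ^ (-(1/2) : ℝ) := Real.rpow_pos_of_pos hs0 _
  have hRHS : 0 ≤ 2 * s ^ (-(1/2) : ℝ) + s := by positivity
  rw [Real.norm_eq_abs, Real.norm_eq_abs, abs_of_nonneg hRHS]
  rcases le_or_gt s 1 with h1 | h1
  · rw [abs_of_nonpos (Real.log_nonpos hs0.le h1)]
    have hlog : Real.log (s ^ (-(1/2) : ℝ)) ≤ s ^ (-(1/2) : ℝ) :=
      (Real.log_le_sub_one_of_pos hr).trans (by linarith)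
    rw [Real.log_rpow hs0] at hlog
    nlinarith
  · rw [abs_of_nonneg (Real.log_nonneg h1.le)]
    have := Real.log_le_sub_one_of_pos hs0
    nlinarith

lemma myKernelIntegral (t : ℝ) (ht : 0 < t) (k : ℕ) :
    ∫ s in (0:ℝ)..t, (1 + Real.log t - Real.log s) * s ^ k
      = t ^ (k+1) / ((k:ℝ)+1) + t ^ (k+1) / ((k:ℝ)+1)^2 := by
  set F : ℝ → ℝ := fun x =>
    ((1 + Real.log t) * x ^ (k+1) - x ^ (k+1) * Real.log x) / ((k:ℝ)+1)
      + x ^ (k+1) / ((k:ℝ)+1)^2 with hF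
  have hk1 : ((k:ℝ)+1) ≠ 0 := by positivity
  have hcM : Continuous fun x : ℝ => x ^ (k+1) * Real.log x := by
    have : (fun x : ℝ => x ^ (k+1) * Real.log x) = fun x => x ^ k * (x * Real.log x) := by
      funext x; ring
    rw [this]
    exact (continuous_pow k).mul Real.continuous_mul_log
  have hcont : ContinuousOn F (Set.Icc 0 t) := by
    apply Continuous.continuousOn
    exact (((continuous_const.mul (continuous_pow _)).sub hcM).div_const _).add
      ((continuous_pow _).div_const _)
  have hderiv : ∀ x ∈ Set.Ioo 0 t,
      HasDerivWithinAt F ((1 + Real.log t - Real.log x) * x ^ k) (Set.Ioi x) x := by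
    intro x hx
    have hx0 : x ≠ 0 := ne_of_gt hx.1
    have h1 : HasDerivAt (fun x : ℝ => x ^ (k+1)) ((↑(k+1):ℝ) * x ^ k) x := by
      simpa using hasDerivAt_pow (k+1) x
    have h2 : HasDerivAt (fun x : ℝ => x ^ (k+1) * Real.log x)
        ((↑(k+1):ℝ) * x ^ k * Real.log x + x ^ (k+1) * x⁻¹) x :=
      h1.mul (Real.hasDerivAt_log hx0)
    have h3 : HasDerivAt F
        ((((1 + Real.log t) * ((↑(k+1):ℝ) * x ^ k)
          - ((↑(k+1):ℝ) * x ^ k * Real.log x + x ^ (k+1) * x⁻¹)) / ((k:ℝ)+1))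
          + ((↑(k+1):ℝ) * x ^ k) / ((k:ℝ)+1)^2) x :=
      (((h1.const_mul _).sub h2).div_const _).add (h1.div_const _)
    have heq : (((1 + Real.log t) * ((↑(k+1):ℝ) * x ^ k)
          - ((↑(k+1):ℝ) * x ^ k * Real.log x + x ^ (k+1) * x⁻¹)) / ((k:ℝ)+1))
          + ((↑(k+1):ℝ) * x ^ k) / ((k:ℝ)+1)^2
        = (1 + Real.log t - Real.log x) * x ^ k := by
      push_cast
      field_simp
      ring
    rw [heq] at h3
    exact h3.hasDerivWithinAt
  have hint : IntervalIntegrable (fun s => (1 + Real.log t - Real.log s) * s ^ k) volume 0 t := by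
    have : IntervalIntegrable (fun s : ℝ => 1 + Real.log t - Real.log s) volume 0 t :=
      intervalIntegrable_const.sub (myIntegrableLog t ht.le)
    exact this.mul_continuousOn (continuous_pow k).continuousOn
  rw [intervalIntegral.integral_eq_sub_of_hasDeriv_right_of_le ht.le hcont hderiv hint]
  have hF0 : F 0 = 0 := by simp [hF]
  have hFt : F t = t ^ (k+1) / ((k:ℝ)+1) + t ^ (k+1) / ((k:ℝ)+1)^2 := by
    rw [hF]
    field_simp
    ring
  rw [hF0, hFt, sub_zero]

lemma myKey (k : ℕ) : ∀ t : ℝ, 0 ≤ t → iterInt k t = ((k:ℝ) + 1) * t ^ k / (k ! : ℝ) := by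
  induction k with
  | zero => intro t _; simp [iterInt]
  | succ k ih =>
    intro t ht0
    rcases eq_or_lt_of_le ht0 with rfl | ht
    · simp [iterInt]
    · rw [iterInt]
      have hcong : ∫ s in (0:ℝ)..t, (1 + Real.log t - Real.log s) * iterInt k s
          = ∫ s in (0:ℝ)..t, (((k:ℝ)+1)/(k ! : ℝ)) * ((1 + Real.log t - Real.log s) * s ^ k) := by
        apply intervalIntegral.integral_congr
        intro s hs
        rw [Set.uIcc_of_le ht.le] at hs
        dsimp only; rw [ih s hs.1]; ring
      rw [hcong, intervalIntegral.integral_const_mul, myKernelIntegral t ht k]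
      have hfac : ((k+1)! : ℝ) = ((k:ℝ)+1) * (k ! : ℝ) := by
        rw [Nat.factorial_succ]; push_cast; ring
      have hfk : (k ! : ℝ) ≠ 0 := Nat.cast_ne_zero.mpr (Nat.factorial_ne_zero k)
      have hk1 : ((k:ℝ)+1) ≠ 0 := by positivity
      rw [hfac]
      push_cast
      field_simp

/-- For `t > 0` and `k ≥ 1`, the `k`-fold iterated integral
`∫₀ᵗ g(t,t₁) ∫₀^{t₁} g(t₁,t₂) ⋯ ∫₀^{t_{k-1}} g(t_{k-1},t_k) dt_k ⋯ dt₁`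
with `g(t,s) = 1 + log t − log s` equals `(k+1) tᵏ / k!`. -/
theorem stmt_1 (t : ℝ) (ht : 0 < t) (k : ℕ) (hk : 1 ≤ k) :
    iterInt k t = (k + 1) * t ^ k / (k ! : ℝ) := by
  exact myKey k t ht.le
end

section
/- Let E be a continuous nonnegative function on [0,T] satisfying E(t) ≤ L ∫₀ᵗ (1 + ln t − ln s) E(s) ds for all t ∈ (0,T], where L ≥ 0 and the integral is finite. Then E ≡ 0 on [0,T]. -/
open MeasureTheory Real

lemma kernel_cont (t : ℝ) : Continuous fun s : ℝ => 2 * s + s * Real.log t - s * Real.log s :=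
  ((continuous_const.mul continuous_id).add (continuous_id.mul continuous_const)).sub
    Real.continuous_mul_log

lemma kernel_deriv (t : ℝ) {x : ℝ} (hx : x ≠ 0) :
    HasDerivAt (fun s : ℝ => 2 * s + s * Real.log t - s * Real.log s)
      (1 + Real.log t - Real.log x) x := by
  have h1 : HasDerivAt (fun s : ℝ => 2 * s) 2 x := by
    simpa using (hasDerivAt_id x).const_mul (2:ℝ)
  have h2 : HasDerivAt (fun s : ℝ => s * Real.log t) (Real.log t) x := by
    simpa using (hasDerivAt_id x).mul_const (Real.log t)
  have h3 := Real.hasDerivAt_mul_log hx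
  have : HasDerivAt (fun s : ℝ => 2 * s + s * Real.log t - s * Real.log s)
      (2 + Real.log t - (Real.log x + 1)) x := (h1.add h2).sub h3
  convert this using 1
  ring

lemma kernel_nonneg {t x : ℝ} (hx : 0 < x) (hxt : x ≤ t) :
    0 ≤ 1 + Real.log t - Real.log x := by
  have := Real.log_le_log hx hxt
  linarith

lemma kernel_intInt (t : ℝ) (ht : 0 < t) :
    IntervalIntegrable (fun s => 1 + Real.log t - Real.log s) volume 0 t := by
  apply intervalIntegral.intervalIntegrable_deriv_of_nonneg ((kernel_cont t).continuousOn)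
  · intro x hx
    rw [min_eq_left ht.le, max_eq_right ht.le] at hx
    exact kernel_deriv t (ne_of_gt hx.1)
  · intro x hx
    rw [min_eq_left ht.le, max_eq_right ht.le] at hx
    exact kernel_nonneg hx.1 hx.2.le

lemma kernel_integral (t : ℝ) (ht : 0 < t) :
    ∫ s in (0:ℝ)..t, (1 + Real.log t - Real.log s) = 2 * t := by
  have := intervalIntegral.integral_eq_sub_of_hasDeriv_right_of_le ht.le
    ((kernel_cont t).continuousOn)
    (fun x hx => (kernel_deriv t (ne_of_gt hx.1)).hasDerivWithinAt)
    (kernel_intInt t ht)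
  rw [this]
  simp

/-- Gronwall-type lemma with logarithmic kernel: if `E` is continuous, nonnegative on `[0,T]`
and `E t ≤ L ∫₀ᵗ (1 + log t - log s) E s ds` on `(0,T]`, then `E ≡ 0` on `[0,T]`. -/
theorem stmt_3 (T L : ℝ) (hT : 0 < T) (hL : 0 ≤ L)
    (E : ℝ → ℝ)
    (hEcont : ContinuousOn E (Set.Icc 0 T))
    (hEnonneg : ∀ t ∈ Set.Icc (0:ℝ) T, 0 ≤ E t)
    (hint : ∀ t ∈ Set.Ioc (0:ℝ) T,
      IntervalIntegrable (fun s => (1 + Real.log t - Real.log s) * E s) volume 0 t)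
    (hineq : ∀ t ∈ Set.Ioc (0:ℝ) T,
      E t ≤ L * ∫ s in (0:ℝ)..t, (1 + Real.log t - Real.log s) * E s) :
    ∀ t ∈ Set.Icc (0:ℝ) T, E t = 0 := by
  have hL1 : (0:ℝ) < 4 * (L + 1) := by linarith
  set ε : ℝ := min T (1 / (4 * (L + 1))) with hε_def
  have hε_pos : 0 < ε := lt_min hT (by positivity)
  have hεT : ε ≤ T := min_le_left _ _
  have hεL : ε ≤ 1 / (4 * (L + 1)) := min_le_right _ _
  have h4Lε : 4 * (L + 1) * ε ≤ 1 := by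
    rw [le_div_iff₀ hL1] at hεL; linarith
  have h2Lε : 2 * L * ε ≤ 1 / 2 := by nlinarith [hε_pos.le]
  clear_value ε
  -- Phase 1 : E = 0 on [0, ε]
  have phase1 : ∀ t ∈ Set.Icc (0:ℝ) ε, E t = 0 := by
    have hsub : Set.Icc (0:ℝ) ε ⊆ Set.Icc 0 T := Set.Icc_subset_Icc le_rfl hεT
    obtain ⟨t₀, ht₀mem, ht₀max⟩ :=
      isCompact_Icc.exists_isMaxOn (Set.nonempty_Icc.2 hε_pos.le) (hEcont.mono hsub)
    set M := E t₀ with hM_def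
    have hmax : ∀ s ∈ Set.Icc (0:ℝ) ε, E s ≤ M := fun s hs => ht₀max hs
    have hM0 : 0 ≤ M := hEnonneg t₀ (hsub ht₀mem)
    have claim1 : ∀ t ∈ Set.Ioc (0:ℝ) ε, E t ≤ 2 * L * ε * M := by
      intro t ht
      have htT : t ∈ Set.Ioc (0:ℝ) T := ⟨ht.1, ht.2.trans hεT⟩
      have h1 : E t ≤ L * ∫ s in (0:ℝ)..t, (1 + Real.log t - Real.log s) * E s :=
        hineq t htT
      have hintM : IntervalIntegrable (fun s => (1 + Real.log t - Real.log s) * M)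
          volume 0 t := (kernel_intInt t ht.1).mul_const M
      have hcomp : (∫ s in (0:ℝ)..t, (1 + Real.log t - Real.log s) * E s)
          ≤ ∫ s in (0:ℝ)..t, (1 + Real.log t - Real.log s) * M := by
        rw [intervalIntegral.integral_of_le ht.1.le, intervalIntegral.integral_of_le ht.1.le]
        apply setIntegral_mono_on ((hint t htT).1) (hintM.1) measurableSet_Ioc
        intro s hs
        have hs0 : 0 < s := hs.1
        have hst : s ≤ t := hs.2
        exact mul_le_mul_of_nonneg_left
          (hmax s ⟨hs0.le, hst.trans ht.2⟩) (kernel_nonneg hs0 hst)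
      have heq : (∫ s in (0:ℝ)..t, (1 + Real.log t - Real.log s) * M) = 2 * t * M := by
        rw [intervalIntegral.integral_mul_const, kernel_integral t ht.1]
      have : E t ≤ L * (2 * t * M) := by
        calc E t ≤ L * ∫ s in (0:ℝ)..t, (1 + Real.log t - Real.log s) * E s := h1
          _ ≤ L * (2 * t * M) := by rw [← heq]; exact mul_le_mul_of_nonneg_left hcomp hL
      nlinarith [ht.1.le, ht.2, hM0, mul_nonneg hL hM0]
    have claim0 : E 0 ≤ 2 * L * ε * M := by
      have hcw : ContinuousWithinAt E (Set.Ioc 0 ε) 0 :=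
        (hEcont 0 ⟨le_rfl, hT.le⟩).mono (hsub.trans' Set.Ioc_subset_Icc_self)
      have hne : (nhdsWithin (0:ℝ) (Set.Ioc 0 ε)).NeBot := by
        apply mem_closure_iff_nhdsWithin_neBot.mp
        rw [closure_Ioc hε_pos.ne]
        exact ⟨le_rfl, hε_pos.le⟩
      exact le_of_tendsto hcw (eventually_mem_nhdsWithin.mono fun s hs => claim1 s hs)
    have hall : ∀ t ∈ Set.Icc (0:ℝ) ε, E t ≤ 2 * L * ε * M := by
      intro t ht
      rcases eq_or_lt_of_le ht.1 with h | h
      · rw [← h]; exact claim0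
      · exact claim1 t ⟨h, ht.2⟩
    have hM : M ≤ 2 * L * ε * M := hall t₀ ht₀mem
    have hM_zero : M = 0 := by nlinarith
    intro t ht
    exact le_antisymm ((hmax t ht).trans hM_zero.le) (hEnonneg t (hsub ht))
  -- constants for phase 2
  set K : ℝ := 1 + Real.log T - Real.log ε with hK_def
  have hK1 : (1:ℝ) ≤ K := by
    have := Real.log_le_log hε_pos hεT
    simp only [hK_def]; linarith
  have hLK : 0 ≤ L * K := mul_nonneg hL (by linarith)
  have hLK1 : (0:ℝ) < L * K + 1 := by linarith
  set δ : ℝ := 1 / (2 * (L * K + 1)) with hδ_def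
  have hδ_pos : 0 < δ := by positivity
  have hLKδ : L * K * δ ≤ 1 / 2 := by
    rw [hδ_def]
    rw [mul_one_div, div_le_div_iff₀ (by linarith) (by norm_num)]
    linarith
  clear_value K δ
  -- Phase 2 step
  have step : ∀ a b : ℝ, ε ≤ a → a ≤ b → b ≤ T → b ≤ a + δ →
      (∀ s ∈ Set.Icc (0:ℝ) a, E s = 0) → ∀ t ∈ Set.Icc (0:ℝ) b, E t = 0 := by
    intro a b hεa hab hbT hbδ hzero
    have ha_pos : 0 < a := hε_pos.trans_le hεa
    have haT : a ≤ T := hab.trans hbT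
    have hsub : Set.Icc a b ⊆ Set.Icc 0 T := Set.Icc_subset_Icc ha_pos.le hbT
    obtain ⟨t₀, ht₀mem, ht₀max⟩ :=
      isCompact_Icc.exists_isMaxOn (Set.nonempty_Icc.2 hab) (hEcont.mono hsub)
    set M := E t₀ with hM_def
    have hmax : ∀ s ∈ Set.Icc a b, E s ≤ M := fun s hs => ht₀max hs
    have hM0 : 0 ≤ M := hEnonneg t₀ (hsub ht₀mem)
    have claim : ∀ t ∈ Set.Ioc a b, E t ≤ L * K * δ * M := by
      intro t ht
      have hat : a ≤ t := ht.1.le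
      have ht_pos : 0 < t := ha_pos.trans ht.1
      have htT : t ∈ Set.Ioc (0:ℝ) T := ⟨ht_pos, ht.2.trans hbT⟩
      have hIt := hint t htT
      have i1 : IntervalIntegrable (fun s => (1 + Real.log t - Real.log s) * E s)
          volume 0 a := hIt.mono_set (by
        rw [Set.uIcc_of_le ha_pos.le, Set.uIcc_of_le ht_pos.le]
        exact Set.Icc_subset_Icc le_rfl hat)
      have i2 : IntervalIntegrable (fun s => (1 + Real.log t - Real.log s) * E s)
          volume a t := hIt.mono_set (by
        rw [Set.uIcc_of_le hat, Set.uIcc_of_le ht_pos.le]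
        exact Set.Icc_subset_Icc ha_pos.le le_rfl)
      have hsplit := intervalIntegral.integral_add_adjacent_intervals i1 i2
      have h0a : (∫ s in (0:ℝ)..a, (1 + Real.log t - Real.log s) * E s) = 0 := by
        have : (∫ s in (0:ℝ)..a, (1 + Real.log t - Real.log s) * E s)
            = ∫ s in (0:ℝ)..a, (0:ℝ) := by
          apply intervalIntegral.integral_congr
          intro s hs
          rw [Set.uIcc_of_le ha_pos.le] at hs
          simp [hzero s hs]
        rw [this]; simp
      have hIccsub : Set.Icc a t ⊆ Set.Icc 0 T := Set.Icc_subset_Icc ha_pos.le (htT.2)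
      have iK : IntervalIntegrable (fun s => K * E s) volume a t := by
        apply ContinuousOn.intervalIntegrable
        rw [Set.uIcc_of_le hat]
        exact continuousOn_const.mul (hEcont.mono hIccsub)
      have hcomp : (∫ s in a..t, (1 + Real.log t - Real.log s) * E s)
          ≤ ∫ s in a..t, K * E s := by
        apply intervalIntegral.integral_mono_on hat i2 iK
        intro s hs
        have hs_pos : 0 < s := ha_pos.trans_le hs.1
        have hker : 1 + Real.log t - Real.log s ≤ K := by
          have h1 := Real.log_le_log ht_pos htT.2
          have h2 := Real.log_le_log hε_pos (hεa.trans hs.1)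
          simp only [hK_def]; linarith
        exact mul_le_mul_of_nonneg_right hker
          (hEnonneg s (hIccsub ⟨hs.1, hs.2⟩))
      have iE : IntervalIntegrable E volume a t := by
        apply ContinuousOn.intervalIntegrable
        rw [Set.uIcc_of_le hat]
        exact hEcont.mono hIccsub
      have hcomp2 : (∫ s in a..t, E s) ≤ (t - a) * M := by
        have : (∫ s in a..t, E s) ≤ ∫ s in a..t, M := by
          apply intervalIntegral.integral_mono_on hat iE intervalIntegrable_const
          intro s hs
          exact hmax s ⟨hs.1, hs.2.trans ht.2⟩
        rw [intervalIntegral.integral_const] at this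
        simpa using this
      have hEt : E t ≤ L * (K * ((t - a) * M)) := by
        have h1 := hineq t htT
        rw [← hsplit, h0a, zero_add] at h1
        have h2 : (∫ s in a..t, K * E s) = K * ∫ s in a..t, E s :=
          intervalIntegral.integral_const_mul K E
        calc E t ≤ L * ∫ s in a..t, (1 + Real.log t - Real.log s) * E s := h1
          _ ≤ L * ∫ s in a..t, K * E s := mul_le_mul_of_nonneg_left hcomp hL
          _ = L * (K * ∫ s in a..t, E s) := by rw [h2]
          _ ≤ L * (K * ((t - a) * M)) := by
              apply mul_le_mul_of_nonneg_left _ hL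
              apply mul_le_mul_of_nonneg_left hcomp2 (by linarith)
      have hta : t - a ≤ δ := by linarith [ht.2]
      nlinarith [sub_nonneg.mpr hat, mul_nonneg hLK hM0]
    have hM_zero : M = 0 := by
      rcases eq_or_lt_of_le ht₀mem.1 with h | h
      · rw [hM_def, ← h]
        exact hzero a ⟨ha_pos.le, le_rfl⟩
      · have h2 := claim t₀ ⟨h, ht₀mem.2⟩
        nlinarith [mul_nonneg (by linarith : (0:ℝ) ≤ 1/2 - L*K*δ) hM0]
    intro t ht
    rcases le_or_gt t a with h | h
    · exact hzero t ⟨ht.1, h⟩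
    · exact le_antisymm ((hmax t ⟨h.le, ht.2⟩).trans hM_zero.le)
        (hEnonneg t ⟨ht.1, ht.2.trans hbT⟩)
  -- Induction
  have key : ∀ n : ℕ, ∀ t ∈ Set.Icc (0:ℝ) (min (ε + n * δ) T), E t = 0 := by
    intro n
    induction n with
    | zero =>
      intro t ht
      apply phase1 t
      rwa [Nat.cast_zero, zero_mul, add_zero, min_eq_left hεT] at ht
    | succ n ih =>
      have hcast : ((n + 1 : ℕ) : ℝ) = (n : ℝ) + 1 := by push_cast; ring
      intro t ht
      rw [hcast] at ht
      have hmono : ε + (n : ℝ) * δ ≤ ε + ((n : ℝ) + 1) * δ := by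
        nlinarith [hδ_pos.le, (Nat.cast_nonneg n : (0:ℝ) ≤ (n:ℝ))]
      refine step (min (ε + (n : ℝ) * δ) T) (min (ε + ((n : ℝ) + 1) * δ) T)
        (le_min (le_add_of_nonneg_right (by positivity)) hεT)
        (min_le_min hmono le_rfl)
        (min_le_right _ _) ?_ ih t ht
      rcases le_total (ε + (n : ℝ) * δ) T with h | h
      · rw [min_eq_left h]
        calc min (ε + ((n : ℝ) + 1) * δ) T ≤ ε + ((n : ℝ) + 1) * δ := min_le_left _ _
          _ = ε + (n : ℝ) * δ + δ := by ring
      · rw [min_eq_right h]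
        exact (min_le_right (ε + ((n : ℝ) + 1) * δ) T).trans
          (le_add_of_nonneg_right hδ_pos.le)
  -- conclude
  obtain ⟨n, hn⟩ := exists_nat_ge (T / δ)
  have hTn : T ≤ ε + n * δ := by
    rw [div_le_iff₀ hδ_pos] at hn
    linarith
  intro t ht
  apply key n t
  rwa [min_eq_right hTn]
end
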